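/- Let H be a complex Hilbert space and let 𝔅 be a quasipoint of L(H). Then: (a) 𝔅 contains a finite-dimensional subspace if and only if there exists a one-dimensional subspace ℂx₀ of H (uniquely determined by 𝔅) such that 𝔅 = {U ∈ L(H) : ℂx₀ ⊆ U}; (b) 𝔅 contains no finite-dimensional subspace if and only if every closed subspace of H of finite codimension belongs to 𝔅. -/

import Mathlib

/-- The lattice `L(H)` of closed subspaces of the Hilbert space `H`,
ordered by inclusion. -/
abbrev ClosedSub (H : Type*) [NormedAddCommGroup H] [InnerProductSpace ℂ H] : Type _ :=
  {U : Submodule ℂ H // IsClosed (U : Set H)}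

variable {H : Type*} [NormedAddCommGroup H] [InnerProductSpace ℂ H]

instance : OrderBot (ClosedSub H) where
  bot := ⟨⊥, by rw [Submodule.bot_coe]; exact isClosed_singleton⟩
  bot_le U := by change (⊥ : Submodule ℂ H) ≤ U.1; exact bot_le

/-- A filter base in a partially ordered set `L` with least element `⊥`. -/
def IsFilterBase {L : Type*} [PartialOrder L] [OrderBot L] (B : Set L) : Prop :=
  B.Nonempty ∧ (⊥ : L) ∉ B ∧ ∀ a ∈ B, ∀ b ∈ B, ∃ c ∈ B, c ≤ a ∧ c ≤ b

/-- A quasipoint of `L`: a maximal filter base. -/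
def IsQuasipoint {L : Type*} [PartialOrder L] [OrderBot L] (B : Set L) : Prop :=
  IsFilterBase B ∧ ∀ C : Set L, IsFilterBase C → B ⊆ C → C = B

private lemma closedSub_bot_eq : ((⊥ : ClosedSub H)).1 = (⊥ : Submodule ℂ H) := rfl

private lemma inf_isClosed (a b : ClosedSub H) :
    IsClosed ((a.1 ⊓ b.1 : Submodule ℂ H) : Set H) := by
  rw [Submodule.coe_inf]; exact a.2.inter b.2

private lemma filterBase_memSet {x : H} (hx : x ≠ 0) :
    IsFilterBase {U : ClosedSub H | x ∈ U.1} := by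
  refine ⟨⟨⟨⊤, isClosed_univ⟩, trivial⟩, ?_, ?_⟩
  · intro h
    exact hx (by simpa [closedSub_bot_eq] using h)
  · rintro a ha b hb
    exact ⟨⟨a.1 ⊓ b.1, inf_isClosed a b⟩, Submodule.mem_inf.mpr ⟨ha, hb⟩,
      Subtype.coe_le_coe.mp inf_le_left, Subtype.coe_le_coe.mp inf_le_right⟩

theorem quasipoint_quantum_lattice_atomic_or_continuous
    {H : Type*} [NormedAddCommGroup H] [InnerProductSpace ℂ H] [CompleteSpace H]
    {𝔅 : Set (ClosedSub H)} (h𝔅 : IsQuasipoint 𝔅) :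
    ((∃ U ∈ 𝔅, FiniteDimensional ℂ U.1) ↔
        ∃ x₀ : H, x₀ ≠ 0 ∧ 𝔅 = {U : ClosedSub H | x₀ ∈ U.1}) ∧
      (∀ x y : H, x ≠ 0 → y ≠ 0 →
        𝔅 = {U : ClosedSub H | x ∈ U.1} → 𝔅 = {U : ClosedSub H | y ∈ U.1} →
        Submodule.span ℂ {x} = Submodule.span ℂ {y}) ∧
      ((¬ ∃ U ∈ 𝔅, FiniteDimensional ℂ U.1) ↔
        ∀ W : ClosedSub H, FiniteDimensional ℂ (H ⧸ W.1) → W ∈ 𝔅) := by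
  obtain ⟨⟨hne, hbot, hmeet⟩, hmax⟩ := h𝔅
  refine ⟨⟨?_, ?_⟩, ?_, ?_, ?_⟩
  · -- forward of (a)
    rintro ⟨U, hU, hUfd⟩
    set s : Set ℕ := {n | ∃ V ∈ 𝔅, ∃ _ : FiniteDimensional ℂ V.1,
      Module.finrank ℂ V.1 = n} with hs_def
    have hs : s.Nonempty := ⟨_, U, hU, hUfd, rfl⟩
    obtain ⟨V, hV, hVfd, hVr⟩ := Nat.sInf_mem hs
    have hVle : ∀ a ∈ 𝔅, V ≤ a := by
      intro a ha
      obtain ⟨c, hc, hcV, hca⟩ := hmeet V hV a ha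
      have hcV' : c.1 ≤ V.1 := hcV
      have hcfd : FiniteDimensional ℂ c.1 := Submodule.finiteDimensional_of_le hcV'
      have h1 : sInf s ≤ Module.finrank ℂ c.1 := Nat.sInf_le ⟨c, hc, hcfd, rfl⟩
      have h2 : Module.finrank ℂ V.1 ≤ Module.finrank ℂ c.1 := by omega
      have : c.1 = V.1 := Submodule.eq_of_le_of_finrank_le hcV' h2
      have : c = V := Subtype.ext this
      exact this ▸ hca
    have hVne : V.1 ≠ ⊥ := by
      intro h
      exact hbot (by rwa [show V = ⊥ from Subtype.ext h] at hV)
    obtain ⟨x₀, hx₀V, hx₀⟩ := Submodule.exists_mem_ne_zero_of_ne_bot hVne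
    refine ⟨x₀, hx₀, ?_⟩
    refine (hmax _ (filterBase_memSet hx₀) ?_).symm
    intro a ha
    exact hVle a ha hx₀V
  · -- backward of (a)
    rintro ⟨x₀, hx₀, rfl⟩
    refine ⟨⟨Submodule.span ℂ {x₀}, Submodule.closed_of_finiteDimensional _⟩,
      Submodule.mem_span_singleton_self x₀, ?_⟩
    infer_instance
  · -- uniqueness of the line
    intro x y hx hy hBx hBy
    have hxy : y ∈ Submodule.span ℂ ({x} : Set H) := by
      have : (⟨Submodule.span ℂ {x}, Submodule.closed_of_finiteDimensional _⟩ :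
          ClosedSub H) ∈ 𝔅 := by
        rw [hBx]; exact Submodule.mem_span_singleton_self x
      rw [hBy] at this
      exact this
    have hyx : x ∈ Submodule.span ℂ ({y} : Set H) := by
      have : (⟨Submodule.span ℂ {y}, Submodule.closed_of_finiteDimensional _⟩ :
          ClosedSub H) ∈ 𝔅 := by
        rw [hBy]; exact Submodule.mem_span_singleton_self y
      rw [hBx] at this
      exact this
    exact le_antisymm (Submodule.span_le.mpr (Set.singleton_subset_iff.mpr hyx))
      (Submodule.span_le.mpr (Set.singleton_subset_iff.mpr hxy))
  · -- forward of (c)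
    intro h W hW
    have key : ∀ V : ClosedSub H, V ∈ 𝔅 → (V.1 ⊓ W.1 : Submodule ℂ H) ≠ ⊥ := by
      intro V hV hVW
      refine h ⟨V, hV, ?_⟩
      have hinj : Function.Injective ((W.1.mkQ).comp V.1.subtype) := by
        intro a b hab
        have hab' : (Submodule.Quotient.mk (a : H) : H ⧸ W.1) = Submodule.Quotient.mk (b : H) := by
          simpa using hab
        have : ((a : H) - b) ∈ W.1 := (Submodule.Quotient.eq _).mp hab'
        have hmem : ((a : H) - b) ∈ V.1 ⊓ W.1 :=
          Submodule.mem_inf.mpr ⟨V.1.sub_mem a.2 b.2, this⟩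
        rw [hVW] at hmem
        exact Subtype.ext (sub_eq_zero.mp hmem)
      exact FiniteDimensional.of_injective _ hinj
    set C : Set (ClosedSub H) :=
      {U | ∃ V ∈ 𝔅, (V.1 ⊓ W.1 : Submodule ℂ H) ≤ U.1} with hC
    obtain ⟨V0, hV0⟩ := hne
    have hCfb : IsFilterBase C := by
      refine ⟨⟨⟨⊤, isClosed_univ⟩, V0, hV0, le_top⟩, ?_, ?_⟩
      · rintro ⟨V, hV, hle⟩
        exact key V hV (le_bot_iff.mp hle)
      · rintro a ⟨V1, hV1, h1⟩ b ⟨V2, hV2, h2⟩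
        obtain ⟨V3, hV3, h31, h32⟩ := hmeet V1 hV1 V2 hV2
        refine ⟨⟨V3.1 ⊓ W.1, inf_isClosed V3 W⟩, ⟨V3, hV3, le_rfl⟩, ?_, ?_⟩
        · exact Subtype.coe_le_coe.mp (le_trans (inf_le_inf_right _ h31) h1)
        · exact Subtype.coe_le_coe.mp (le_trans (inf_le_inf_right _ h32) h2)
    have hsub : 𝔅 ⊆ C := fun U hU => ⟨U, hU, inf_le_left⟩
    have : C = 𝔅 := hmax C hCfb hsub
    rw [← this]
    exact ⟨V0, hV0, inf_le_right⟩
  · -- backward of (c)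
    intro h
    rintro ⟨U, hU, hUfd⟩
    set W : ClosedSub H := ⟨U.1ᗮ, U.1.isClosed_orthogonal⟩ with hW
    have hsup : U.1 ⊔ U.1ᗮ = ⊤ := Submodule.sup_orthogonal_of_hasOrthogonalProjection
    have hsurj : Function.Surjective ((U.1ᗮ.mkQ).comp U.1.subtype) := by
      intro z
      obtain ⟨y, rfl⟩ := U.1ᗮ.mkQ_surjective z
      have hy : y ∈ U.1 ⊔ U.1ᗮ := hsup ▸ Submodule.mem_top
      obtain ⟨u, hu, v, hv, rfl⟩ := Submodule.mem_sup.mp hy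
      refine ⟨⟨u, hu⟩, ?_⟩
      simp only [LinearMap.comp_apply, Submodule.subtype_apply, Submodule.mkQ_apply]
      rw [Submodule.Quotient.eq]
      simpa using hv
    have hWfd : FiniteDimensional ℂ (H ⧸ W.1) :=
      Module.Finite.of_surjective _ hsurj
    have hWmem : W ∈ 𝔅 := h W hWfd
    obtain ⟨c, hc, hcU, hcW⟩ := hmeet U hU W hWmem
    have : c.1 ≤ ⊥ := by
      have : c.1 ≤ U.1 ⊓ U.1ᗮ := le_inf hcU hcW
      rwa [Submodule.inf_orthogonal_eq_bot] at this
    have : c = ⊥ := Subtype.ext (le_bot_iff.mp this)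
    exact hbot (this ▸ hc)
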